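/- The abelian group A_𝒯 is finite. -/

import Mathlib

/-- A triangle presentation compatible with the bijection `lam : P ≃ L`:
a set of triples satisfying conditions (i), (ii), (iii). -/
structure IsTrianglePresentation {P L : Type*} [Membership P L]
    (lam : P ≃ L) (T : Set (P × P × P)) : Prop where
  exists_iff : ∀ x y : P, (∃ z : P, (x, y, z) ∈ T) ↔ y ∈ lam x
  cyclic : ∀ x y z : P, (x, y, z) ∈ T → (y, z, x) ∈ T
  unique : ∀ x y z z' : P, (x, y, z) ∈ T → (x, y, z') ∈ T → z = z'

open Classical in
/-- Relators of `A_𝒯`: generators are the points of `P` plus one extra generator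
`ε` (encoded as `none : Option P`). -/
def triangleRels {P L : Type*} [Fintype P] [Membership P L]
    (lam : P ≃ L) (T : Set (P × P × P)) : Set (FreeAbelianGroup (Option P)) :=
  (Set.range fun x : P =>
      (∑ y ∈ Finset.univ.filter fun y : P => ¬ y ∈ lam x, FreeAbelianGroup.of (some y))
        - FreeAbelianGroup.of (some x)) ∪
  ((fun t : P × P × P =>
      FreeAbelianGroup.of (some t.1) + FreeAbelianGroup.of (some t.2.1)
        + FreeAbelianGroup.of (some t.2.2) - FreeAbelianGroup.of (none : Option P)) '' T) ∪
  {(∑ x : P, FreeAbelianGroup.of (some x)) - FreeAbelianGroup.of (none : Option P)}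

/-- The abelian group `A_𝒯`, presented by generators `P ∪ {ε}` and the relations above. -/
abbrev TriangleGroup {P L : Type*} [Fintype P] [Membership P L]
    (lam : P ≃ L) (T : Set (P × P × P)) : Type _ :=
  FreeAbelianGroup (Option P) ⧸ AddSubgroup.closure (triangleRels lam T)

/-- The image in `A_𝒯` of the generator corresponding to a point `x ∈ P`. -/
def triangleGen {P L : Type*} [Fintype P] [Membership P L]
    (lam : P ≃ L) (T : Set (P × P × P)) (x : P) : TriangleGroup lam T :=
  QuotientAddGroup.mk (FreeAbelianGroup.of (some x))

/-- The image in `A_𝒯` of the generator `ε`. -/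
def triangleEps {P L : Type*} [Fintype P] [Membership P L]
    (lam : P ≃ L) (T : Set (P × P × P)) : TriangleGroup lam T :=
  QuotientAddGroup.mk (FreeAbelianGroup.of (none : Option P))

/-! ### Auxiliary material for the proof of finiteness -/

set_option linter.unusedSectionVars false

open Classical Finset Configuration

section Aux
variable {P L : Type*} [Fintype P] [Fintype L] [Membership P L]
  [Configuration.ProjectivePlane P L]

/-- The integer matrix of the relators coming from the complements of the lines `lam x`. -/
noncomputable def TPmat (lam : P ≃ L) : Matrix P P ℤ :=
  Matrix.of fun x y => (if y ∈ lam x then 0 else 1) - (if y = x then 1 else 0)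

/-- Number of `x` such that `y ∈ lam x` is `q + 1`. -/
lemma TP_card1 (lam : P ≃ L) (y : P) :
    (univ.filter fun x : P => y ∈ lam x).card = ProjectivePlane.order P L + 1 := by
  classical
  rw [← Fintype.card_subtype]
  have h : Fintype.card {x : P // y ∈ lam x} = Fintype.card {l : L // y ∈ l} :=
    Fintype.card_congr (lam.subtypeEquiv fun x => Iff.rfl)
  rw [h, ← Nat.card_eq_fintype_card]
  exact ProjectivePlane.lineCount_eq L y

/-- For distinct points `y ≠ y'` there is a unique `x` with `y, y' ∈ lam x`. -/
lemma TP_card2 (lam : P ≃ L) {y y' : P} (h : y ≠ y') :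
    (univ.filter fun x : P => y ∈ lam x ∧ y' ∈ lam x).card = 1 := by
  rw [Finset.card_eq_one]
  refine ⟨lam.symm (HasLines.mkLine (P := P) (L := L) h), ?_⟩
  ext x
  simp only [mem_filter, mem_univ, true_and, mem_singleton]
  constructor
  · rintro ⟨h1, h2⟩
    have ha := HasLines.mkLine_ax (P := P) (L := L) h
    have hl : lam x = HasLines.mkLine (P := P) (L := L) h :=
      (Nondegenerate.eq_or_eq (P := P) (L := L) h1 h2 ha.1 ha.2).resolve_left h
    rw [← hl, Equiv.symm_apply_apply]
  · rintro rfl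
    rw [Equiv.apply_symm_apply]
    exact HasLines.mkLine_ax (P := P) (L := L) h

/-- The relator matrix has nonzero determinant. -/
lemma TPmat_det_ne_zero {q : ℕ} (hq : 2 ≤ q)
    (horder : ProjectivePlane.order P L = q) (lam : P ≃ L) :
    (TPmat lam).det ≠ 0 := by
  classical
  intro hdet
  have hdet' : ((TPmat lam).map (Int.cast : ℤ → ℚ)).det = 0 := by
    have h := RingHom.map_det (Int.castRingHom ℚ) (TPmat lam)
    rw [hdet] at h
    simpa using h.symm
  obtain ⟨v, hv, hMv⟩ := (Matrix.exists_mulVec_eq_zero_iff).mpr hdet'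
  set s : ℚ := ∑ y : P, v y with hs_def
  have hq1 : (1 : ℚ) < (q : ℚ) := by exact_mod_cast Nat.lt_of_lt_of_le one_lt_two hq
  have hcardP : (Fintype.card P : ℚ) = (q : ℚ) ^ 2 + q + 1 := by
    rw [ProjectivePlane.card_points P L, horder]; push_cast; ring
  -- the basic linear relation
  have h1 : ∀ x : P, (∑ y : P, if y ∈ lam x then v y else 0) = s - v x := by
    intro x
    have h0 := congrFun hMv x
    simp only [Matrix.mulVec, dotProduct, Matrix.map_apply, TPmat, Matrix.of_apply,
      Pi.zero_apply] at h0
    push_cast at h0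
    have hrw : ∀ y : P,
        ((if y ∈ lam x then (0:ℚ) else 1) - if y = x then 1 else 0) * v y
          = (v y - (if y ∈ lam x then v y else 0)) - (if y = x then v y else 0) := by
      intro y; split_ifs <;> ring
    rw [Finset.sum_congr rfl fun y _ => hrw y] at h0
    rw [Finset.sum_sub_distrib, Finset.sum_sub_distrib, Finset.sum_ite_eq' univ x v] at h0
    simp only [mem_univ, if_true] at h0
    linarith [h0]
  -- column sums
  have hcol : ∀ y : P, (∑ x : P, if y ∈ lam x then (1:ℚ) else 0) = (q : ℚ) + 1 := by
    intro y
    rw [Finset.sum_boole]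
    have := TP_card1 lam y
    rw [horder] at this
    rw [this]; push_cast; ring
  -- step 1 : s = 0
  have hs : s = 0 := by
    have hA : ∑ x : P, (∑ y : P, if y ∈ lam x then v y else 0) = ((q:ℚ)+1) * s := by
      rw [Finset.sum_comm]
      have : ∀ y : P, (∑ x : P, if y ∈ lam x then v y else 0)
          = ((q:ℚ)+1) * v y := by
        intro y
        have hrw : ∀ x : P, (if y ∈ lam x then v y else 0)
            = (if y ∈ lam x then (1:ℚ) else 0) * v y := by
          intro x; split_ifs <;> ring
        rw [Finset.sum_congr rfl fun x _ => hrw x, ← Finset.sum_mul, hcol]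
      rw [Finset.sum_congr rfl fun y _ => this y, ← Finset.mul_sum]
    have hB : ∑ x : P, (s - v x) = ((q:ℚ)^2 + q + 1) * s - s := by
      rw [Finset.sum_sub_distrib, Finset.sum_const, Finset.card_univ, nsmul_eq_mul, hcardP]
    rw [Finset.sum_congr rfl fun x _ => h1 x, hB] at hA
    have : ((q:ℚ)^2 - 1) * s = 0 := by linarith
    rcases mul_eq_zero.mp this with h | h
    · exfalso; nlinarith
    · exact h
  -- step 2 : ∑ v² = 0
  have hsq : ∑ y : P, v y ^ 2 = 0 := by
    have hLHS : ∑ x : P, (∑ y : P, if y ∈ lam x then v y else 0) ^ 2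
        = ∑ x : P, v x ^ 2 := by
      refine Finset.sum_congr rfl fun x _ => ?_
      rw [h1 x, hs]; ring
    have hexp : ∑ x : P, (∑ y : P, if y ∈ lam x then v y else 0) ^ 2
        = ∑ y : P, ∑ y' : P,
            (((univ.filter fun x : P => y ∈ lam x ∧ y' ∈ lam x).card : ℚ)) * (v y * v y') := by
      have hp : ∀ x : P, (∑ y : P, if y ∈ lam x then v y else 0) ^ 2
          = ∑ y : P, ∑ y' : P,
              (if y ∈ lam x ∧ y' ∈ lam x then (1:ℚ) else 0) * (v y * v y') := by
        intro x
        rw [sq, Finset.sum_mul_sum]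
        refine Finset.sum_congr rfl fun y _ => Finset.sum_congr rfl fun y' _ => ?_
        by_cases h1' : y ∈ lam x <;> by_cases h2' : y' ∈ lam x <;> simp [h1', h2']
      rw [Finset.sum_congr rfl fun x _ => hp x]
      rw [Finset.sum_comm]
      refine Finset.sum_congr rfl fun y _ => ?_
      rw [Finset.sum_comm]
      refine Finset.sum_congr rfl fun y' _ => ?_
      rw [← Finset.sum_mul, Finset.sum_boole]
    have hcount : ∀ y y' : P,
        (((univ.filter fun x : P => y ∈ lam x ∧ y' ∈ lam x).card : ℚ)) * (v y * v y')
          = v y * v y' + (if y = y' then (q:ℚ) * (v y * v y') else 0) := by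
      intro y y'
      by_cases h : y = y'
      · subst h
        have : (univ.filter fun x : P => y ∈ lam x ∧ y ∈ lam x)
            = univ.filter fun x : P => y ∈ lam x := by
          refine Finset.filter_congr fun x _ => by simp
        rw [this, TP_card1 lam y, horder]
        simp; ring
      · rw [TP_card2 lam h]
        simp [h]
    have hfin : ∑ y : P, ∑ y' : P,
        (((univ.filter fun x : P => y ∈ lam x ∧ y' ∈ lam x).card : ℚ)) * (v y * v y')
        = s * s + (q:ℚ) * ∑ y : P, v y ^ 2 := by
      rw [Finset.sum_congr rfl fun y _ => Finset.sum_congr rfl fun y' _ => hcount y y']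
      rw [Finset.sum_congr rfl fun y _ => Finset.sum_add_distrib]
      rw [Finset.sum_add_distrib]
      congr 1
      · rw [← Finset.sum_mul_sum]
      · rw [Finset.sum_congr rfl fun y _ => Finset.sum_ite_eq univ y
          (fun y' => (q:ℚ) * (v y * v y'))]
        simp only [mem_univ, if_true]
        rw [Finset.mul_sum]
        refine Finset.sum_congr rfl fun y _ => by ring
    rw [hexp, hfin, hs] at hLHS
    have : ((q:ℚ) - 1) * ∑ y : P, v y ^ 2 = 0 := by linarith
    rcases mul_eq_zero.mp this with h | h
    · exfalso; linarith
    · exact h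
  apply hv
  funext y
  have hnn : ∀ y ∈ (univ : Finset P), (0:ℚ) ≤ v y ^ 2 := fun y _ => sq_nonneg _
  have := (Finset.sum_eq_zero_iff_of_nonneg hnn).mp hsq y (mem_univ y)
  exact pow_eq_zero_iff two_ne_zero |>.mp this

open Classical in
/-- The first family of relators, written as rows of the matrix `TPmat`. -/
lemma TP_rel_eq (lam : P ≃ L) (x : P) :
    (∑ y ∈ Finset.univ.filter fun y : P => ¬ y ∈ lam x, FreeAbelianGroup.of (some y))
        - FreeAbelianGroup.of (some x)
      = ∑ y : P, TPmat lam x y • FreeAbelianGroup.of (some y : Option P) := by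
  have hrw : ∀ y : P, TPmat lam x y • FreeAbelianGroup.of (some y : Option P)
      = (if ¬ y ∈ lam x then FreeAbelianGroup.of (some y : Option P) else 0)
        - (if y = x then FreeAbelianGroup.of (some y : Option P) else 0) := by
    intro y
    simp only [TPmat, Matrix.of_apply, sub_smul]
    congr 1 <;> split_ifs <;> simp
  rw [Finset.sum_congr rfl fun y _ => hrw y, Finset.sum_sub_distrib]
  congr 1
  · rw [Finset.sum_filter]
  · rw [Finset.sum_ite_eq' Finset.univ x (fun y => FreeAbelianGroup.of (some y : Option P))]
    simp

open Classical in
/-- A multiple of each generator lies in the relation subgroup. -/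
lemma TP_smul_mem (lam : P ≃ L) (T : Set (P × P × P)) (p : P) :
    (TPmat lam).det • FreeAbelianGroup.of (some p : Option P)
      ∈ AddSubgroup.closure (triangleRels lam T) := by
  have hrel : ∀ x : P,
      ((∑ y ∈ Finset.univ.filter fun y : P => ¬ y ∈ lam x, FreeAbelianGroup.of (some y))
        - FreeAbelianGroup.of (some x)) ∈ AddSubgroup.closure (triangleRels lam T) := by
    intro x
    exact AddSubgroup.subset_closure (Or.inl (Or.inl ⟨x, rfl⟩))
  have key : (TPmat lam).det • FreeAbelianGroup.of (some p : Option P)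
      = ∑ x : P, (TPmat lam).adjugate p x •
          ((∑ y ∈ Finset.univ.filter fun y : P => ¬ y ∈ lam x, FreeAbelianGroup.of (some y))
            - FreeAbelianGroup.of (some x)) := by
    simp_rw [TP_rel_eq lam, Finset.smul_sum, smul_smul]
    rw [Finset.sum_comm]
    simp_rw [← Finset.sum_smul, ← Matrix.mul_apply, Matrix.adjugate_mul]
    have h1 : ∀ y : P, ((TPmat lam).det • (1 : Matrix P P ℤ)) p y
        = if p = y then (TPmat lam).det else 0 := by
      intro y
      simp [Matrix.smul_apply, Matrix.one_apply, mul_ite]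
    simp_rw [h1]
    have h2 : ∀ y : P, (if p = y then (TPmat lam).det else 0) •
        FreeAbelianGroup.of (some y : Option P)
        = if p = y then (TPmat lam).det • FreeAbelianGroup.of (some y : Option P) else 0 := by
      intro y; split_ifs <;> simp
    simp_rw [h2]
    rw [Finset.sum_ite_eq Finset.univ p
      (fun y => (TPmat lam).det • FreeAbelianGroup.of (some y : Option P))]
    simp
  rw [key]
  exact AddSubgroup.sum_mem _ fun x _ => AddSubgroup.zsmul_mem _ (hrel x) _

end Aux

open Classical in
theorem stmt2 {P L : Type*} [Fintype P] [Fintype L] [Membership P L]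
    [Configuration.ProjectivePlane P L] (q : ℕ) (hq : 2 ≤ q)
    (horder : Configuration.ProjectivePlane.order P L = q)
    (lam : P ≃ L) (T : Set (P × P × P)) (hT : IsTrianglePresentation lam T) :
    Finite (TriangleGroup lam T) := by
  classical
  -- the group is finitely generated
  haveI hfree : Module.Finite ℤ (FreeAbelianGroup (Option P)) :=
    Module.Finite.of_basis (FreeAbelianGroup.basis (Option P))
  haveI hfg : AddGroup.FG (FreeAbelianGroup (Option P)) :=
    Module.Finite.iff_addGroup_fg.mp hfree
  haveI hfg2 : AddGroup.FG (TriangleGroup lam T) :=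
    AddGroup.fg_of_surjective
      (f := QuotientAddGroup.mk' (AddSubgroup.closure (triangleRels lam T)))
      (QuotientAddGroup.mk'_surjective _)
  -- the determinant kills every generator
  set d : ℤ := (TPmat lam).det with hd
  have hdne : d ≠ 0 := TPmat_det_ne_zero hq horder lam
  have hgen : ∀ p : P, d • (triangleGen lam T p) = 0 := by
    intro p
    have h0 : (QuotientAddGroup.mk (d • FreeAbelianGroup.of (some p : Option P)) :
        TriangleGroup lam T) = 0 :=
      (QuotientAddGroup.eq_zero_iff _).mpr (TP_smul_mem lam T p)
    rw [QuotientAddGroup.mk_zsmul] at h0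
    exact h0
  have heps : d • (triangleEps lam T) = 0 := by
    have hSrel : ((∑ x : P, FreeAbelianGroup.of (some x : Option P))
        - FreeAbelianGroup.of (none : Option P)) ∈ AddSubgroup.closure (triangleRels lam T) :=
      AddSubgroup.subset_closure (Or.inr rfl)
    have hS : (QuotientAddGroup.mk (∑ x : P, FreeAbelianGroup.of (some x : Option P)) :
        TriangleGroup lam T) = triangleEps lam T := by
      rw [triangleEps, ← sub_eq_zero, ← QuotientAddGroup.mk_sub]
      exact (QuotientAddGroup.eq_zero_iff _).mpr hSrel
    have hsum : (QuotientAddGroup.mk (∑ x : P, FreeAbelianGroup.of (some x : Option P)) :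
        TriangleGroup lam T) = ∑ x : P, triangleGen lam T x := by
      exact map_sum (QuotientAddGroup.mk' (AddSubgroup.closure (triangleRels lam T)))
        (fun x : P => FreeAbelianGroup.of (some x : Option P)) Finset.univ
    rw [← hS, hsum, Finset.smul_sum]
    exact Finset.sum_eq_zero fun x _ => hgen x
  -- hence it kills everything
  have hall : ∀ g : TriangleGroup lam T, d • g = 0 := by
    intro g
    obtain ⟨f, rfl⟩ := QuotientAddGroup.mk'_surjective
      (AddSubgroup.closure (triangleRels lam T)) g
    induction f using FreeAbelianGroup.induction_on with
    | zero => simp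
    | of a =>
      cases a with
      | none => exact heps
      | some p => exact hgen p
    | neg a ha =>
      rw [map_neg, smul_neg, ha, neg_zero]
    | add f g hf hg =>
      rw [map_add, smul_add, hf, hg, add_zero]
  -- torsion + finitely generated ⇒ finite
  have htor : AddMonoid.IsTorsion (TriangleGroup lam T) := by
    intro g
    rw [isOfFinAddOrder_iff_nsmul_eq_zero]
    refine ⟨d.natAbs, Int.natAbs_pos.mpr hdne, ?_⟩
    have : (d.natAbs : ℤ) • g = d.natAbs • g := natCast_zsmul g d.natAbs
    rcases Int.natAbs_eq d with h | h
    · rw [← this, ← h, hall g]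
    · rw [← this, show (d.natAbs : ℤ) = -d by omega, neg_zsmul, hall g, neg_zero]
  exact AddCommGroup.finite_of_fg_torsion _ htor
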